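/- Let s = s(g,a) be a souped-up Lie algebra and V(s) = F(s)/J a vertex algebra where J is a proper ideal containing the souped-up vertex algebra ideal I(s). Then V(s) is an s-module via s·x := s₀x (s ∈ s) and a·x := a₋₁x (a ∈ a); explicitly, for all s,t ∈ s, all a,b ∈ a, and all x ∈ V(s): ([s,t])₀x = s₀(t₀x) − t₀(s₀x) and (ab)₋₁x = a₋₁(b₋₁x). -/

import Mathlib

noncomputable section

/-!
Common framework: "infinite free algebras" in the sense of Eller, *Chiral vector bundles*.

An infinite free algebra (completed) is modelled as a topological vector space `F`
over a field `k` of characteristic zero, with a distinguished vector `one` and a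
`ℤ`-indexed family of bilinear products `circ n`.  The formal infinite sums provided
by the completion are interpreted by `tsum` (`∑'`).  An ideal is a subspace closed
under all the products (on both sides) and under convergent (formal) infinite sums.
-/

/-- An infinite free algebra (completed). -/
structure IFA (k F : Type) [Field k] [CharZero k] [AddCommGroup F] [Module k F]
    [TopologicalSpace F] where
  /-- the distinguished vector `1` -/
  one : F
  /-- the products `∘ₙ`; `circ n x y` is `x ∘ₙ y` -/
  circ : ℤ → F → F → F
  circ_add_left : ∀ (n : ℤ) (x x' y : F), circ n (x + x') y = circ n x y + circ n x' y
  circ_add_right : ∀ (n : ℤ) (x y y' : F), circ n x (y + y') = circ n x y + circ n x y'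
  circ_smul_left : ∀ (n : ℤ) (c : k) (x y : F), circ n (c • x) y = c • circ n x y
  circ_smul_right : ∀ (n : ℤ) (c : k) (x y : F), circ n x (c • y) = c • circ n x y

namespace IFA

/-- The binomial coefficient `C(m, K)` for `m : ℤ`, `K : ℕ`, as an element of `k`. -/
def zbinom (k : Type) [Field k] [CharZero k] (m : ℤ) (K : ℕ) : k :=
  (∏ i ∈ Finset.range K, ((m : k) - (i : k))) / (K.factorial : k)

variable {k F : Type} [Field k] [CharZero k] [AddCommGroup F] [Module k F]
  [TopologicalSpace F] (A : IFA k F)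

/-- `D x := x ∘₋₂ 1`. -/
def D (x : F) : F := A.circ (-2) x A.one

/-- identity generators `i⟦x;n⟧ := 1ₙx − δ_{n,−1}x` -/
def geni (x : F) (n : ℤ) : F := A.circ n A.one x - (if n = -1 then x else 0)

/-- derivation generators `d⟦x,y;n⟧ := D(xₙy) − (Dx)ₙy − xₙ(Dy)` -/
def gend (x y : F) (n : ℤ) : F :=
  A.D (A.circ n x y) - A.circ n (A.D x) y - A.circ n x (A.D y)

/-- shift generators `e⟦x,y;n⟧ := (Dx)ₙy + n·x_{n−1}y` -/
def gene (x y : F) (n : ℤ) : F := A.circ n (A.D x) y + (n : k) • A.circ (n - 1) x y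

/-- quasi-commutativity generators
`qc⟦x,y;n⟧ := xₙy + Σ_{K≥0}((−1)^{n+K}/K!)·D^K(y_{n+K}x)` -/
def genqc (x y : F) (n : ℤ) : F :=
  A.circ n x y +
    ∑' K : ℕ, (((-1 : k) ^ (n + (K : ℤ))) * ((K.factorial : k)⁻¹)) •
      (A.D)^[K] (A.circ (n + (K : ℤ)) y x)

/-- quasi-associativity generators
`qa⟦x,y,z;m,n⟧ := (x_my)_nz − Σ_{K≥0} C(m,K)(−1)^K (x_{m−K}(y_{n+K}z) − (−1)^m y_{m+n−K}(x_Kz))` -/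
def genqa (x y z : F) (m n : ℤ) : F :=
  A.circ n (A.circ m x y) z -
    ∑' K : ℕ, ((zbinom k m K) * ((-1 : k) ^ K)) •
      (A.circ (m - (K : ℤ)) x (A.circ (n + (K : ℤ)) y z)
        - ((-1 : k) ^ m) • A.circ (m + n - (K : ℤ)) y (A.circ (K : ℤ) x z))

/-- An ideal of the (completed) infinite free algebra: a subspace closed under all the
products `∘ₙ` by arbitrary elements on both sides, and under the formal (convergent)
infinite sums provided by the completion. -/
def IsIdeal (J : Submodule k F) : Prop :=
  (∀ (n : ℤ) (x y : F), y ∈ J → A.circ n x y ∈ J ∧ A.circ n y x ∈ J) ∧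
    (∀ f : ℕ → F, (∀ i, f i ∈ J) → Summable f → (∑' i, f i) ∈ J)

/-- The ideal generated by a set `S ⊆ F`. -/
def idealGenBy (S : Set F) : Submodule k F := sInf {J | A.IsIdeal J ∧ S ⊆ J}

/-- The generators of the vertex algebra ideal other than the locality generators:
`i⟦x;n⟧, d⟦x,y;n⟧, qc⟦x,y;n⟧` for `n = −1` and all `n ≥ 0`; `qa⟦x,y,z;m,n⟧` for
`m, n ∈ {−1,0,1,2,…}`; and `e⟦x,y;n⟧` for all `n ∈ ℤ`. -/
def baseGens : Set F :=
  {w | ∃ (x : F) (n : ℤ), -1 ≤ n ∧ w = A.geni x n} ∪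
  {w | ∃ (x y : F) (n : ℤ), -1 ≤ n ∧ w = A.gend x y n} ∪
  {w | ∃ (x y : F) (n : ℤ), -1 ≤ n ∧ w = A.genqc x y n} ∪
  {w | ∃ (x y z : F) (m n : ℤ), -1 ≤ m ∧ -1 ≤ n ∧ w = A.genqa x y z m n} ∪
  {w | ∃ (x y : F) (n : ℤ), w = A.gene x y n}

/-- The vertex algebra ideal `I` associated to the locality function `N : F × F → ℕ`:
the ideal generated by the base generators together with the locality elements
`xₙy` for all `x, y ∈ F` and `n ≥ N(x,y)`. -/
def vertexIdeal (N : F → F → ℕ) : Submodule k F :=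
  A.idealGenBy
    (A.baseGens ∪ {w | ∃ (x y : F) (n : ℤ), (N x y : ℤ) ≤ n ∧ w = A.circ n x y})

end IFA
/-!
Concrete construction of the (completed) infinite free algebra `F(v)` generated by a
unital vector space `v`: product shapes are binary trees with integer-labelled internal
nodes; the span of the monomials of a fixed shape is the corresponding iterated tensor
power of `v`; and the completion (allowing formal infinite sums of monomials of pairwise
distinct product shapes) is the direct product over all shapes.  Each shape component
carries the discrete topology and `F(v)` the product topology, so that a family is
summable exactly when every shape component receives only finitely many contributions.
-/

/-- Product shapes: full binary rooted trees with an integer at each internal node. -/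
inductive Shape : Type
  | leaf : Shape
  | node : ℤ → Shape → Shape → Shape
  deriving DecidableEq

/-- A bundled `k`-vector space. -/
structure MC (k : Type) [Field k] where
  T : Type
  [grp : AddCommGroup T]
  [mod : Module k T]

attribute [instance] MC.grp MC.mod

variable (k : Type) [Field k] [CharZero k] (V : Type) [AddCommGroup V] [Module k V]

/-- The space spanned by the monomials of a given product shape (bundled). -/
def monData : Shape → MC k
  | .leaf => MC.mk V
  | .node _ l r => MC.mk (TensorProduct k (monData l).T (monData r).T)

/-- The space spanned by the monomials of a given product shape. -/
abbrev MonSp (s : Shape) : Type := (monData k V s).T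

instance (s : Shape) : TopologicalSpace (MonSp k V s) := ⊥

/-- The completed infinite free algebra `F(v)` on the (unital) vector space `v = V`. -/
abbrev FV : Type := ∀ s : Shape, MonSp k V s

/-- The embedding of the generating space `v` into `F(v)` (the length-1 component). -/
def ι (a : V) : FV k V := fun s =>
  match s with
  | .leaf => a
  | .node _ _ _ => 0

/-- The product `x ∘ₙ y` on `F(v)`. -/
def op (n : ℤ) (x y : FV k V) : FV k V := fun s =>
  match s with
  | .leaf => 0
  | .node m l r => if n = m then TensorProduct.tmul k (x l) (y r) else 0

/-- `F(v)` as an infinite free algebra, with distinguished vector the image of the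
distinguished vector `e ∈ v`. -/
def freeIFA (e : V) : IFA k (FV k V) where
  one := ι k V e
  circ := op k V
  circ_add_left := by
    intro n x x' y; funext s
    cases s with
    | leaf => simp [op]
    | node m l r =>
        by_cases h : n = m <;>
          simp [op, h, Pi.add_apply, TensorProduct.add_tmul] <;> rfl
  circ_add_right := by
    intro n x y y'; funext s
    cases s with
    | leaf => simp [op]
    | node m l r =>
        by_cases h : n = m <;>
          simp [op, h, Pi.add_apply, TensorProduct.tmul_add] <;> rfl
  circ_smul_left := by
    intro n c x y; funext s
    cases s with
    | leaf => simp [op]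
    | node m l r =>
        by_cases h : n = m
        · simp only [op, h, Pi.smul_apply]
          exact (TensorProduct.smul_tmul' c (x l) (y r)).symm
        · simp [op, h]
  circ_smul_right := by
    intro n c x y; funext s
    cases s with
    | leaf => simp [op]
    | node m l r =>
        by_cases h : n = m <;>
          simp [op, h, Pi.smul_apply, TensorProduct.tmul_smul] <;> rfl

/-- The vertex algebra ideal `I(v)` of `F(v)`: generated by the base generators
together with the locality elements `uₙv` for `u, v ∈ v` (the generating space) and
`n ≥ N(u,v)`. -/
def genVertexIdeal (e : V) (N : V → V → ℕ) : Submodule k (FV k V) :=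
  (freeIFA k V e).idealGenBy
    ((freeIFA k V e).baseGens ∪
      {w | ∃ (a b : V) (n : ℤ), (N a b : ℤ) ≤ n ∧ w = op k V n (ι k V a) (ι k V b)})
/-!
Souped-up Lie algebras `s = s(g, a)`: an associative commutative unital `k`-algebra `a`
and a `k`-Lie algebra `g` such that `g` is a left `a`-module, `a` is a `g`-module on
which `g` acts by derivations, compatibly.  The underlying unital vector space of the
semidirect sum `s = g ⊕ a` is modelled as `L × A` with distinguished vector `(0, 1)`.
-/

/-- The action data making `(g, a) = (L, A)` a souped-up Lie algebra: `g` acts on `a`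
by derivations, the action is a Lie algebra action, and it is compatible with the
`a`-module structure of `g` in that `[g, a·h] = [g,a]·h + a·[g,h]`. -/
structure SoupAct (k A L : Type) [Field k] [CharZero k] [CommRing A] [Algebra k A]
    [LieRing L] [LieAlgebra k L] [Module A L] [IsScalarTower k A L] where
  act : L →ₗ[k] A →ₗ[k] A
  act_deriv : ∀ (g : L) (a b : A), act g (a * b) = act g a * b + a * act g b
  act_bracket : ∀ (g h : L) (a : A), act ⁅g, h⁆ a = act g (act h a) - act h (act g a)
  act_smul_bracket : ∀ (g : L) (a : A) (h : L), ⁅g, a • h⁆ = act g a • h + a • ⁅g, h⁆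

namespace SoupAct

variable {k A L : Type} [Field k] [CharZero k] [CommRing A] [Algebra k A]
  [LieRing L] [LieAlgebra k L] [Module A L] [IsScalarTower k A L]

/-- The Lie bracket of the semidirect sum Lie algebra `s = g ⊕ a` (`a` abelian):
`[(g,a), (h,b)] = ([g,h], g·b − h·a)`. -/
def sBracket (σ : SoupAct k A L) (p q : L × A) : L × A :=
  (⁅p.1, q.1⁆, σ.act p.1 q.2 - σ.act q.1 p.2)

end SoupAct

/-- Left multiplication by `a ∈ a` on `s = g ⊕ a`. -/
def aMul {A L : Type} [Mul A] [SMul A L] (c : A) (p : L × A) : L × A :=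
  (c • p.1, c * p.2)

/-- The distinguished vector `1 = (0, 1)` of `s`. -/
def sOne (A L : Type) [CommRing A] [LieRing L] : L × A := ((0 : L), (1 : A))

variable (k : Type) [Field k] [CharZero k] (A : Type) [CommRing A] [Algebra k A]
  (L : Type) [LieRing L] [LieAlgebra k L] [Module A L] [IsScalarTower k A L]

/-- The additional generators of the souped-up vertex algebra ideal:
`s⟦s,t⟧ := s₀t − [s,t]`, `a⟦a,s⟧ := a₋₁s − a·s`, and
`am⟦a,b,x⟧ := (ab)₋₁x − a₋₁(b₋₁x)` (the latter being linear in `x`, it is imposed for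
all `x ∈ F(s)`, equivalently for all monomials). -/
def soupGens (σ : SoupAct k A L) : Set (FV k (L × A)) :=
  {w | ∃ p q : L × A,
      w = op k (L × A) 0 (ι k (L × A) p) (ι k (L × A) q) - ι k (L × A) (σ.sBracket p q)} ∪
  {w | ∃ (c : A) (p : L × A),
      w = op k (L × A) (-1) (ι k (L × A) ((0 : L), c)) (ι k (L × A) p)
            - ι k (L × A) (aMul c p)} ∪
  {w | ∃ (c d : A) (x : FV k (L × A)),
      w = op k (L × A) (-1) (ι k (L × A) ((0 : L), c * d)) x
            - op k (L × A) (-1) (ι k (L × A) ((0 : L), c))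
                (op k (L × A) (-1) (ι k (L × A) ((0 : L), d)) x)}

/-- The full generating set of the souped-up vertex algebra ideal `I(s)`. -/
def soupGensAll (σ : SoupAct k A L) (N : (L × A) → (L × A) → ℕ) : Set (FV k (L × A)) :=
  (freeIFA k (L × A) (sOne A L)).baseGens ∪
    {w | ∃ (p q : L × A) (n : ℤ), (N p q : ℤ) ≤ n ∧
        w = op k (L × A) n (ι k (L × A) p) (ι k (L × A) q)} ∪
    soupGens k A L σ

/-- The souped-up vertex algebra ideal `I(s)` associated to the locality function
`N : s × s → ℕ`. -/
def soupIdeal (σ : SoupAct k A L) (N : (L × A) → (L × A) → ℕ) :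
    Submodule k (FV k (L × A)) :=
  (freeIFA k (L × A) (sOne A L)).idealGenBy (soupGensAll k A L σ N)

section Aux

lemma mem_idealGenBy_of_mem {k F : Type} [Field k] [CharZero k] [AddCommGroup F]
    [Module k F] [TopologicalSpace F] (Af : IFA k F) (S : Set F) {x : F}
    (hx : x ∈ S) : x ∈ Af.idealGenBy S :=
  Submodule.mem_sInf.2 fun _ hJ => hJ.2 hx

lemma circ_sub_left {k F : Type} [Field k] [CharZero k] [AddCommGroup F]
    [Module k F] [TopologicalSpace F] (Af : IFA k F) (n : ℤ) (x y z : F) :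
    Af.circ n (x - y) z = Af.circ n x z - Af.circ n y z := by
  have : x - y = x + (-1 : k) • y := by
    rw [neg_one_smul]; abel
  rw [this, Af.circ_add_left, Af.circ_smul_left, neg_one_smul]
  abel

instance MonSp.discrete {k : Type} [Field k] (V : Type) [AddCommGroup V]
    [Module k V] (s : Shape) : DiscreteTopology (MonSp k V s) := ⟨rfl⟩

lemma zbinom_zero_left {k : Type} [Field k] [CharZero k] {K : ℕ} (hK : K ≠ 0) :
    IFA.zbinom k 0 K = 0 := by
  unfold IFA.zbinom
  rw [Finset.prod_eq_zero (Finset.mem_range.2 (Nat.pos_of_ne_zero hK)) (by simp)]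
  simp

lemma genqa_zero_zero {k F : Type} [Field k] [CharZero k] [AddCommGroup F]
    [Module k F] [TopologicalSpace F] [T2Space F] (Af : IFA k F) (x y z : F) :
    Af.genqa x y z 0 0 = Af.circ 0 (Af.circ 0 x y) z -
      (Af.circ 0 x (Af.circ 0 y z) - Af.circ 0 y (Af.circ 0 x z)) := by
  unfold IFA.genqa
  congr 1
  rw [tsum_eq_single 0 (by
    intro K hK
    rw [zbinom_zero_left hK, zero_mul, zero_smul])]
  norm_num [IFA.zbinom]

end Aux

/-- Let `s = s(g,a)` be a souped-up Lie algebra and `V(s) = F(s)/J`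
a vertex algebra, `J` a proper ideal containing the souped-up vertex algebra ideal
`I(s)`.  Then `V(s)` is an `s`-module via `s·x := s₀x` and `a·x := a₋₁x`: for all
`s, t ∈ s`, `a, b ∈ a`, `x ∈ V(s)`, `([s,t])₀x = s₀(t₀x) − t₀(s₀x)` and
`(ab)₋₁x = a₋₁(b₋₁x)`. -/
theorem statement9 (k : Type) [Field k] [CharZero k] (A : Type) [CommRing A]
    [Algebra k A] [Nontrivial A] (L : Type) [LieRing L] [LieAlgebra k L] [Module A L]
    [IsScalarTower k A L] (σ : SoupAct k A L) (N : (L × A) → (L × A) → ℕ)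
    (J : Submodule k (FV k (L × A)))
    (hJ : (freeIFA k (L × A) (sOne A L)).IsIdeal J)
    (hIJ : soupIdeal k A L σ N ≤ J) (hproper : J ≠ ⊤) :
    (∀ (p q : L × A) (x : FV k (L × A)),
        op k (L × A) 0 (ι k (L × A) (σ.sBracket p q)) x -
            (op k (L × A) 0 (ι k (L × A) p) (op k (L × A) 0 (ι k (L × A) q) x) -
              op k (L × A) 0 (ι k (L × A) q) (op k (L × A) 0 (ι k (L × A) p) x))
          ∈ J) ∧
    (∀ (c d : A) (x : FV k (L × A)),
        op k (L × A) (-1) (ι k (L × A) ((0 : L), c * d)) x -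
            op k (L × A) (-1) (ι k (L × A) ((0 : L), c))
              (op k (L × A) (-1) (ι k (L × A) ((0 : L), d)) x)
          ∈ J) := by
  set Af := freeIFA k (L × A) (sOne A L) with hAf
  have hop : Af.circ = op k (L × A) := rfl
  constructor
  · intro p q x
    -- the quasi-associativity generator with m = n = 0 lies in J
    have hqa : Af.genqa (ι k (L × A) p) (ι k (L × A) q) x 0 0 ∈ J := by
      apply hIJ
      apply mem_idealGenBy_of_mem
      exact Or.inl (Or.inl (Or.inl (Or.inr
        ⟨ι k (L × A) p, ι k (L × A) q, x, 0, 0, by norm_num, by norm_num, rfl⟩)))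
    -- the `s`-generator `p₀q − [p,q]` lies in J
    have hs : op k (L × A) 0 (ι k (L × A) p) (ι k (L × A) q)
        - ι k (L × A) (σ.sBracket p q) ∈ J := by
      apply hIJ
      apply mem_idealGenBy_of_mem
      exact Or.inr (Or.inl (Or.inl ⟨p, q, rfl⟩))
    -- hence so is `(p₀q − [p,q])₀ x`
    have hs' : Af.circ 0 (op k (L × A) 0 (ι k (L × A) p) (ι k (L × A) q)
        - ι k (L × A) (σ.sBracket p q)) x ∈ J :=
      (hJ.1 0 x _ hs).2
    have hqaval := genqa_zero_zero Af (ι k (L × A) p) (ι k (L × A) q) x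
    rw [circ_sub_left] at hs'
    have key : op k (L × A) 0 (ι k (L × A) (σ.sBracket p q)) x -
        (op k (L × A) 0 (ι k (L × A) p) (op k (L × A) 0 (ι k (L × A) q) x) -
          op k (L × A) 0 (ι k (L × A) q) (op k (L × A) 0 (ι k (L × A) p) x)) =
        Af.genqa (ι k (L × A) p) (ι k (L × A) q) x 0 0 -
          (Af.circ 0 (op k (L × A) 0 (ι k (L × A) p) (ι k (L × A) q)) x -
            Af.circ 0 (ι k (L × A) (σ.sBracket p q)) x) := by
      rw [hqaval, hop]
      abel
    rw [key]
    exact Submodule.sub_mem J hqa hs'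
  · intro c d x
    apply hIJ
    apply mem_idealGenBy_of_mem
    exact Or.inr (Or.inr ⟨c, d, x, rfl⟩)
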